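/- arXiv:2403.09956 — 2 statements merged into one kernel-verified Lean document; each statement's English description precedes it below -/
import Mathlib

section
/- Let J ≥ 2 and let α̃ ∈ S^{J-1}. Let (α_K) be reals with α_K > J for all K, α_K → ∞ and α_K/K → 0 as K → ∞. For each K let Π_K be a random vector taking values in S^{J-1} such that √(α_K)·(Π_K − (α_K·α̃ − 1_J)/(α_K − J)) converges in distribution to N(0, diag(α̃) − α̃α̃ᵀ) (this hypothesis holds when Π_K ~ Dirichlet(α_K·α̃) with each α_K·α̃_j > 1, by the asymptotic normality of the Dirichlet distribution around its mode). Let U_1, …, U_K be i.i.d. Uniform(0,1) random variables independent of Π_K and define T_{Kj} = Σ_{k=1}^K 1(U_k ∈ P_j(Π_K)). Then (√(α_K + 1)/K)(T_K − K·α̃) converges in distribution to N(0, diag(α̃) − α̃α̃ᵀ). -/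
open MeasureTheory ProbabilityTheory Filter Topology

noncomputable section

/-- The `j`-th interval `P_j(h)` of the partition of `[0,1]` induced by `h ∈ S^{J-1}`:
`P_1(h) = [0, h_1]` and `P_j(h) = (h_1 + ⋯ + h_{j-1}, h_1 + ⋯ + h_j]` for `j ≥ 2`. -/
def Pint {J : ℕ} (h : Fin J → ℝ) (j : Fin J) : Set ℝ :=
  if j.val = 0 then Set.Icc 0 (∑ ℓ ∈ Finset.Iic j, h ℓ)
  else Set.Ioc (∑ ℓ ∈ Finset.Iio j, h ℓ) (∑ ℓ ∈ Finset.Iic j, h ℓ)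

open Classical in
/-- The conditionally multinomial count vector `T_K`:
`T_{Kj} = ∑_{k=1}^K 1(U_k ∈ P_j(Π))`. -/
def countVec {Ω : Type*} {J : ℕ} (K : ℕ) (U : ℕ → Ω → ℝ) (Pi : Ω → Fin J → ℝ)
    (ω : Ω) (j : Fin J) : ℝ :=
  ∑ k ∈ Finset.range K, if U k ω ∈ Pint (Pi ω) j then 1 else 0

/-- Convergence in distribution (weak convergence of the laws): the expectations of every
bounded continuous function converge. -/
def TendstoInDistr {Ω E : Type*} [MeasurableSpace Ω] [MeasurableSpace E] [TopologicalSpace E]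
    (Pr : Measure Ω) (X : ℕ → Ω → E) (D : Measure E) : Prop :=
  ∀ f : BoundedContinuousFunction E ℝ,
    Tendsto (fun K => ∫ ω, f (X K ω) ∂Pr) atTop (𝓝 (∫ x, f x ∂D))

/-- `D` is the centered multivariate normal distribution `N(0, S)`: every linear functional
`x ↦ tᵀx` pushes `D` forward to the real Gaussian with mean `0` and variance `tᵀSt`. -/
def IsCenteredGaussian {ι : Type*} [Fintype ι] (D : Measure (ι → ℝ)) (S : Matrix ι ι ℝ) : Prop :=
  IsProbabilityMeasure D ∧
    ∀ t : ι → ℝ, D.map (fun x => ∑ i, t i * x i) =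
      gaussianReal 0 (Real.toNNReal (∑ i, ∑ i', t i * S i i' * t i'))

section Aux

variable {J : ℕ}

lemma sum_Iic_eq {h : Fin J → ℝ} {j : Fin J} :
    ∑ ℓ ∈ Finset.Iic j, h ℓ = (∑ ℓ ∈ Finset.Iio j, h ℓ) + h j := by
  rw [← Finset.Iio_insert, Finset.sum_insert (by simp : j ∉ Finset.Iio j)]
  ring

lemma simplex_partial_nonneg {h : Fin J → ℝ} (hh : h ∈ stdSimplex ℝ (Fin J)) (s : Finset (Fin J)) :
    0 ≤ ∑ ℓ ∈ s, h ℓ :=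
  Finset.sum_nonneg fun i _ => hh.1 i

lemma simplex_partial_le_one {h : Fin J → ℝ} (hh : h ∈ stdSimplex ℝ (Fin J)) (s : Finset (Fin J)) :
    ∑ ℓ ∈ s, h ℓ ≤ 1 := by
  rw [← hh.2]
  exact Finset.sum_le_sum_of_subset_of_nonneg (Finset.subset_univ s) (fun i _ _ => hh.1 i)

lemma Pint_subset {h : Fin J → ℝ} (hh : h ∈ stdSimplex ℝ (Fin J)) (j : Fin J) :
    Pint h j ⊆ Set.Icc 0 1 := by
  unfold Pint
  split
  · exact Set.Icc_subset_Icc le_rfl (simplex_partial_le_one hh _)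
  · intro x hx
    exact ⟨le_trans (simplex_partial_nonneg hh _) (le_of_lt hx.1),
      le_trans hx.2 (simplex_partial_le_one hh _)⟩

lemma Pint_measurableSet (h : Fin J → ℝ) (j : Fin J) : MeasurableSet (Pint h j) := by
  unfold Pint; split
  · exact measurableSet_Icc
  · exact measurableSet_Ioc

lemma Pint_volume {h : Fin J → ℝ} (hh : h ∈ stdSimplex ℝ (Fin J)) (j : Fin J) :
    (volume.restrict (Set.Icc (0:ℝ) 1)) (Pint h j) = ENNReal.ofReal (h j) := by
  rw [Measure.restrict_apply (Pint_measurableSet h j),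
    Set.inter_eq_self_of_subset_left (Pint_subset hh j)]
  unfold Pint
  split
  rename_i hj
  · have hio : Finset.Iio j = ∅ := Finset.eq_empty_of_forall_notMem fun x hx => by
      simp only [Finset.mem_Iio, Fin.lt_def, hj] at hx; omega
    rw [sum_Iic_eq, hio, Finset.sum_empty, zero_add, Real.volume_Icc, sub_zero]
  · rw [Real.volume_Ioc, sum_Iic_eq, add_sub_cancel_left]

/-- Measurability of the event `u b ∈ Pint (p b) j` for measurable `u`, `p`. -/
lemma measurableSet_mem_Pint {β : Type*} [MeasurableSpace β] {u : β → ℝ} {p : β → Fin J → ℝ}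
    (hu : Measurable u) (hp : Measurable p) (j : Fin J) :
    MeasurableSet {b | u b ∈ Pint (p b) j} := by
  have hS : Measurable (fun b => ∑ ℓ ∈ Finset.Iic j, p b ℓ) :=
    Finset.measurable_sum _ fun ℓ _ => (measurable_pi_apply ℓ).comp hp
  have hS' : Measurable (fun b => ∑ ℓ ∈ Finset.Iio j, p b ℓ) :=
    Finset.measurable_sum _ fun ℓ _ => (measurable_pi_apply ℓ).comp hp
  unfold Pint
  split
  · have : {b | u b ∈ Set.Icc 0 (∑ ℓ ∈ Finset.Iic j, p b ℓ)}
        = {b | 0 ≤ u b} ∩ {b | u b ≤ ∑ ℓ ∈ Finset.Iic j, p b ℓ} := by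
      ext b; simp [Set.mem_Icc]
    rw [this]
    exact (measurableSet_le measurable_const hu).inter (measurableSet_le hu hS)
  · have : {b | u b ∈ Set.Ioc (∑ ℓ ∈ Finset.Iio j, p b ℓ) (∑ ℓ ∈ Finset.Iic j, p b ℓ)}
        = {b | ∑ ℓ ∈ Finset.Iio j, p b ℓ < u b} ∩ {b | u b ≤ ∑ ℓ ∈ Finset.Iic j, p b ℓ} := by
      ext b; simp [Set.mem_Ioc]
    rw [this]
    exact (measurableSet_lt hS' hu).inter (measurableSet_le hu hS)

open Classical in
/-- Integral of the centered indicator against the uniform distribution vanishes. -/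
lemma uniform_integral_Pint {h : Fin J → ℝ} (hh : h ∈ stdSimplex ℝ (Fin J)) (j : Fin J) :
    ∫ u, (if u ∈ Pint h j then (1:ℝ) else 0) ∂(volume.restrict (Set.Icc (0:ℝ) 1)) = h j := by
  have : (fun u => if u ∈ Pint h j then (1:ℝ) else 0) = (Pint h j).indicator 1 := by
    ext u; simp [Set.indicator_apply]
  rw [this, MeasureTheory.integral_indicator_one (Pint_measurableSet h j), measureReal_def, Pint_volume hh j,
    ENNReal.toReal_ofReal (hh.1 j)]

end Aux

section Moment

variable {Ω : Type*} [MeasurableSpace Ω] {Pr : Measure Ω} [IsProbabilityMeasure Pr] {J : ℕ}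

instance : IsProbabilityMeasure (volume.restrict (Set.Icc (0:ℝ) 1)) :=
  ⟨by simp [Real.volume_Icc]⟩

/-- Integrability of a bounded measurable function on a probability space. -/
lemma integrable_of_bdd {α : Type*} [MeasurableSpace α] {μ : Measure α} [IsFiniteMeasure μ]
    {f : α → ℝ} (hm : Measurable f) (C : ℝ) (hC : ∀ a, |f a| ≤ C) :
    Integrable f μ :=
  ⟨hm.aestronglyMeasurable, HasFiniteIntegral.of_bounded (C := C) (ae_of_all _ hC)⟩

open Classical in
lemma chi_meas {U : ℕ → Ω → ℝ} (hU : ∀ k, Measurable (U k)) {P : Ω → Fin J → ℝ}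
    (hP : Measurable P) (k : ℕ) (j : Fin J) :
    Measurable (fun ω => if U k ω ∈ Pint (P ω) j then (1:ℝ) else 0) := by
  have := measurableSet_mem_Pint (hU k) hP j
  exact Measurable.ite this measurable_const measurable_const

open Classical in
/-- The off-diagonal covariance term vanishes. -/
lemma cross_term_zero {U : ℕ → Ω → ℝ} (hU : ∀ k, Measurable (U k))
    (hUunif : ∀ k, Pr.map (U k) = volume.restrict (Set.Icc (0:ℝ) 1))
    (hUiid : iIndepFun U Pr)
    {P : Ω → Fin J → ℝ} (hP : Measurable P) (hPval : ∀ ω, P ω ∈ stdSimplex ℝ (Fin J))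
    (hindep : IndepFun (fun ω m => U m ω) P Pr)
    {k l : ℕ} (hkl : k ≠ l) (j : Fin J) :
    ∫ ω, ((if U k ω ∈ Pint (P ω) j then (1:ℝ) else 0) - P ω j)
        * ((if U l ω ∈ Pint (P ω) j then (1:ℝ) else 0) - P ω j) ∂Pr = 0 := by
  set clamp : ℝ → ℝ := fun t => max 0 (min 1 t) with hclampdef
  have hclamp_meas : Measurable clamp :=
    measurable_const.max (measurable_const.min measurable_id)
  have hclamp01 : ∀ t, 0 ≤ clamp t ∧ clamp t ≤ 1 := fun t =>
    ⟨le_max_left _ _, max_le zero_le_one (min_le_left _ _)⟩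
  set g : (ℕ → ℝ) × (Fin J → ℝ) → ℝ := fun q =>
    ((if q.1 k ∈ Pint q.2 j then (1:ℝ) else 0) - clamp (q.2 j))
      * ((if q.1 l ∈ Pint q.2 j then (1:ℝ) else 0) - clamp (q.2 j)) with hgdef
  have hfac_meas : ∀ m : ℕ, Measurable (fun q : (ℕ → ℝ) × (Fin J → ℝ) =>
      (if q.1 m ∈ Pint q.2 j then (1:ℝ) else 0) - clamp (q.2 j)) := by
    intro m
    refine Measurable.sub (Measurable.ite ?_ measurable_const measurable_const)
      (hclamp_meas.comp ((measurable_pi_apply j).comp measurable_snd))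
    exact measurableSet_mem_Pint ((measurable_pi_apply m).comp measurable_fst) measurable_snd j
  have hg_meas : Measurable g := (hfac_meas k).mul (hfac_meas l)
  have hfac_bdd : ∀ m q, |(if (q : (ℕ → ℝ) × (Fin J → ℝ)).1 m ∈ Pint q.2 j then (1:ℝ) else 0)
      - clamp (q.2 j)| ≤ 1 := by
    intro m q
    rw [abs_le]
    constructor
    · split <;> simp [(hclamp01 (q.2 j)).2] <;> linarith [(hclamp01 (q.2 j)).2]
    · split <;> simp [(hclamp01 (q.2 j)).1] <;> linarith [(hclamp01 (q.2 j)).1]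
  have hg_bdd : ∀ q, |g q| ≤ 1 := by
    intro q
    rw [hgdef, abs_mul]
    calc |_| * |_| ≤ 1 * 1 := mul_le_mul (hfac_bdd k q) (hfac_bdd l q) (abs_nonneg _) zero_le_one
    _ = 1 := one_mul 1
  set UU : Ω → ℕ → ℝ := fun ω m => U m ω with hUUdef
  have hUU_meas : Measurable UU := measurable_pi_lambda _ fun m => hU m
  -- rewrite the integrand as g ∘ (UU, P)
  have hrw : ∀ ω, ((if U k ω ∈ Pint (P ω) j then (1:ℝ) else 0) - P ω j)
      * ((if U l ω ∈ Pint (P ω) j then (1:ℝ) else 0) - P ω j) = g (UU ω, P ω) := by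
    intro ω
    have hc : clamp (P ω j) = P ω j := by
      have h0 := (hPval ω).1 j
      have h1 : P ω j ≤ 1 := by
        have := simplex_partial_le_one (hPval ω) {j}
        simpa using this
      simp [hclampdef, min_eq_right h1, max_eq_right h0]
    simp only [hgdef, hUUdef, hc]
  simp only [hrw]
  haveI : IsProbabilityMeasure (Pr.map UU) := Measure.isProbabilityMeasure_map hUU_meas.aemeasurable
  haveI : IsProbabilityMeasure (Pr.map P) := Measure.isProbabilityMeasure_map hP.aemeasurable
  have hcl : ∀ h : Fin J → ℝ, h ∈ stdSimplex ℝ (Fin J) → clamp (h j) = h j := by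
    intro h hh
    have h1 : h j ≤ 1 := by simpa using simplex_partial_le_one hh {j}
    simp [hclampdef, min_eq_right h1, max_eq_right (hh.1 j)]
  have h1 : ∫ ω, g (UU ω, P ω) ∂Pr = ∫ q, g q ∂((Pr.map UU).prod (Pr.map P)) := by
    rw [← (indepFun_iff_map_prod_eq_prod_map_map hUU_meas.aemeasurable hP.aemeasurable).mp hindep]
    exact (integral_map (hUU_meas.aemeasurable.prodMk hP.aemeasurable)
      hg_meas.aestronglyMeasurable).symm
  have hg_int : Integrable g ((Pr.map UU).prod (Pr.map P)) := integrable_of_bdd hg_meas 1 hg_bdd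
  rw [h1, integral_prod_symm g hg_int]
  -- the inner integral vanishes for every h in the simplex
  have hinner : ∀ h : Fin J → ℝ, h ∈ stdSimplex ℝ (Fin J) →
      ∫ x, g (x, h) ∂(Pr.map UU) = 0 := by
    intro h hh
    set f : ℝ → ℝ := fun u => (if u ∈ Pint h j then (1:ℝ) else 0) - h j with hfdef
    have hf_meas : Measurable f :=
      (Measurable.ite (Pint_measurableSet h j) measurable_const measurable_const).sub
        measurable_const
    have hgx : ∀ x : ℕ → ℝ, g (x, h) = f (x k) * f (x l) := by
      intro x; simp only [hgdef, hfdef, hcl h hh]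
    simp only [hgx]
    have hmm : Measurable (fun x : ℕ → ℝ => (x k, x l)) :=
      (measurable_pi_apply k).prodMk (measurable_pi_apply l)
    have hFm : Measurable (fun p : ℝ × ℝ => f p.1 * f p.2) :=
      (hf_meas.comp measurable_fst).mul (hf_meas.comp measurable_snd)
    have hmap2 : (Pr.map UU).map (fun x : ℕ → ℝ => (x k, x l))
        = Pr.map (fun ω => (U k ω, U l ω)) := by
      rw [Measure.map_map hmm hUU_meas]
      rfl
    have hpairUV : Pr.map (fun ω => (U k ω, U l ω))
        = (Pr.map (U k)).prod (Pr.map (U l)) :=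
      (indepFun_iff_map_prod_eq_prod_map_map (hU k).aemeasurable
        (hU l).aemeasurable).mp (hUiid.indepFun hkl)
    have hstep : ∫ x, f (x k) * f (x l) ∂(Pr.map UU)
        = ∫ p : ℝ × ℝ, f p.1 * f p.2 ∂((Pr.map (U k)).prod (Pr.map (U l))) := by
      rw [← hpairUV, ← hmap2]
      exact (integral_map hmm.aemeasurable hFm.aestronglyMeasurable).symm
    rw [hstep, integral_prod_mul f f, hUunif k, hUunif l]
    have hind_int : Integrable (fun u => if u ∈ Pint h j then (1:ℝ) else 0)
        (volume.restrict (Set.Icc (0:ℝ) 1)) :=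
      integrable_of_bdd (Measurable.ite (Pint_measurableSet h j)
        measurable_const measurable_const) 1
        (fun a => by by_cases ha : a ∈ Pint h j <;> simp [ha])
    have hfint : ∫ u, f u ∂(volume.restrict (Set.Icc (0:ℝ) 1)) = 0 := by
      simp only [hfdef]
      rw [integral_sub hind_int (integrable_const _)]
      rw [uniform_integral_Pint hh j, integral_const]
      simp
    rw [hfint, mul_zero]
  -- reduce to a.e. vanishing under the law of P
  have hnull : (Pr.map P) ((stdSimplex ℝ (Fin J))ᶜ) = 0 := by
    rw [Measure.map_apply hP (isClosed_stdSimplex (𝕜 := ℝ) (ι := Fin J)).measurableSet.compl]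
    have : P ⁻¹' (stdSimplex ℝ (Fin J))ᶜ = ∅ := by
      ext ω; simp [hPval ω]
    simp [this]
  have hae : (fun h => ∫ x, g (x, h) ∂(Pr.map UU)) =ᵐ[Pr.map P] 0 := by
    rw [Filter.EventuallyEq, ae_iff]
    refine measure_mono_null (fun h hh => ?_) hnull
    simp only [Set.mem_setOf_eq, Pi.zero_apply] at hh
    simp only [Set.mem_compl_iff]
    intro hmem
    exact hh (hinner h hmem)
  exact integral_eq_zero_of_ae hae

end Moment

open Classical in
/-- Second moment bound for the centered multinomial count. -/
lemma moment_bound {Ω : Type*} [MeasurableSpace Ω] {Pr : Measure Ω} [IsProbabilityMeasure Pr]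
    {J : ℕ} {U : ℕ → Ω → ℝ} (hU : ∀ k, Measurable (U k))
    (hUunif : ∀ k, Pr.map (U k) = volume.restrict (Set.Icc (0:ℝ) 1))
    (hUiid : iIndepFun U Pr)
    {P : Ω → Fin J → ℝ} (hP : Measurable P) (hPval : ∀ ω, P ω ∈ stdSimplex ℝ (Fin J))
    (hindep : IndepFun (fun ω m => U m ω) P Pr) (K : ℕ) (j : Fin J) :
    ∫ ω, (countVec K U P ω j - K * P ω j)^2 ∂Pr ≤ K := by
  set χ : ℕ → Ω → ℝ := fun k ω => if U k ω ∈ Pint (P ω) j then 1 else 0 with hχdef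
  have hPj : Measurable (fun ω => P ω j) := (measurable_pi_apply j).comp hP
  have hPj01 : ∀ ω, 0 ≤ P ω j ∧ P ω j ≤ 1 := fun ω =>
    ⟨(hPval ω).1 j, by simpa using simplex_partial_le_one (hPval ω) {j}⟩
  have hχ01 : ∀ k ω, 0 ≤ χ k ω ∧ χ k ω ≤ 1 := fun k ω => by
    constructor <;> · simp only [hχdef]; split <;> norm_num
  have hfacbd : ∀ k ω, |χ k ω - P ω j| ≤ 1 := fun k ω => by
    rw [abs_le]
    constructor <;> [linarith [(hχ01 k ω).1, (hPj01 ω).2]; linarith [(hχ01 k ω).2, (hPj01 ω).1]]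
  have hbd : ∀ k l ω, |(χ k ω - P ω j) * (χ l ω - P ω j)| ≤ 1 := fun k l ω => by
    rw [abs_mul]
    calc |χ k ω - P ω j| * |χ l ω - P ω j| ≤ 1 * 1 :=
          mul_le_mul (hfacbd k ω) (hfacbd l ω) (abs_nonneg _) zero_le_one
    _ = 1 := one_mul 1
  have hmeas_term : ∀ k l : ℕ, Measurable (fun ω => (χ k ω - P ω j) * (χ l ω - P ω j)) :=
    fun k l => ((chi_meas hU hP k j).sub hPj).mul ((chi_meas hU hP l j).sub hPj)
  have hint : ∀ k l : ℕ, Integrable (fun ω => (χ k ω - P ω j) * (χ l ω - P ω j)) Pr :=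
    fun k l => integrable_of_bdd (hmeas_term k l) 1 (hbd k l)
  have hrw : ∀ ω, countVec K U P ω j - K * P ω j = ∑ k ∈ Finset.range K, (χ k ω - P ω j) := by
    intro ω
    rw [Finset.sum_sub_distrib, Finset.sum_const, Finset.card_range, nsmul_eq_mul]
    rfl
  have hsq : ∀ ω, (countVec K U P ω j - K * P ω j)^2
      = ∑ k ∈ Finset.range K, ∑ l ∈ Finset.range K, (χ k ω - P ω j) * (χ l ω - P ω j) := by
    intro ω
    rw [hrw ω, sq, Finset.sum_mul_sum]
  simp only [hsq]
  rw [integral_finset_sum _ (fun k _ => integrable_finset_sum _ (fun l _ => hint k l))]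
  rw [Finset.sum_congr rfl (fun k _ => integral_finset_sum _ (fun l _ => hint k l))]
  calc ∑ k ∈ Finset.range K, ∑ l ∈ Finset.range K,
        ∫ ω, (χ k ω - P ω j) * (χ l ω - P ω j) ∂Pr
      ≤ ∑ k ∈ Finset.range K, ∑ l ∈ Finset.range K, (if k = l then (1:ℝ) else 0) := by
        refine Finset.sum_le_sum fun k _ => Finset.sum_le_sum fun l _ => ?_
        by_cases hkl : k = l
        · subst hkl
          rw [if_pos rfl]
          calc ∫ ω, (χ k ω - P ω j) * (χ k ω - P ω j) ∂Pr
              ≤ ∫ _, (1:ℝ) ∂Pr := integral_mono (hint k k) (integrable_const 1)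
                (fun ω => le_trans (le_abs_self _) (hbd k k ω))
          _ = 1 := by simp
        · rw [if_neg hkl]
          exact le_of_eq (cross_term_zero hU hUunif hUiid hP hPval hindep hkl j)
    _ = ∑ k ∈ Finset.range K, (1:ℝ) := by
        refine Finset.sum_congr rfl fun k hk => ?_
        rw [Finset.sum_ite_eq]
        simp [hk]
    _ = K := by simp

section Slutsky

variable {Ω : Type*} [MeasurableSpace Ω] {Pr : Measure Ω} [IsProbabilityMeasure Pr] {J : ℕ}

/-- A Slutsky-type lemma: if `Y_K ⇝ D`, `c_K → 1` and `X_K - c_K • Y_K → 0` in probability,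
then `X_K ⇝ D`. -/
lemma slutsky {Y X : ℕ → Ω → Fin J → ℝ} (hYm : ∀ K, Measurable (Y K))
    (hXm : ∀ K, Measurable (X K))
    {D : Measure (Fin J → ℝ)} [IsProbabilityMeasure D]
    (hY : TendstoInDistr Pr Y D)
    {c : ℕ → ℝ} (hc : Tendsto c atTop (𝓝 1))
    (hR : ∀ δ : ℝ, 0 < δ →
      Tendsto (fun K => (Pr {ω | δ ≤ ‖X K ω - c K • Y K ω‖}).toReal) atTop (𝓝 0)) :
    TendstoInDistr Pr X D := by
  intro f
  -- weak convergence of the laws of Y as probability measures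
  set μ : ℕ → ProbabilityMeasure (Fin J → ℝ) := fun K =>
    ⟨Pr.map (Y K), Measure.isProbabilityMeasure_map (hYm K).aemeasurable⟩ with hμdef
  set ν : ProbabilityMeasure (Fin J → ℝ) := ⟨D, inferInstance⟩ with hνdef
  have hconv : Tendsto μ atTop (𝓝 ν) := by
    rw [ProbabilityMeasure.tendsto_iff_forall_integral_tendsto]
    intro g
    have heq : ∀ K, ∫ x, g x ∂((μ K : Measure (Fin J → ℝ))) = ∫ ω, g (Y K ω) ∂Pr := by
      intro K
      exact integral_map (hYm K).aemeasurable g.continuous.measurable.aestronglyMeasurable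
    simp only [heq]
    exact hY g
  -- it suffices to show that the difference of the integrals tends to 0
  have hdiff : Tendsto (fun K => (∫ ω, f (X K ω) ∂Pr) - ∫ ω, f (Y K ω) ∂Pr) atTop (𝓝 0) := by
    rw [NormedAddCommGroup.tendsto_nhds_zero]
    intro ε hε
    set M : ℝ := ‖f‖ with hMdef
    have hM0 : 0 ≤ M := norm_nonneg f
    set ε₁ : ℝ := ε / (8 * (M + 1)) with hε₁def
    have hε₁ : 0 < ε₁ := div_pos hε (by linarith)
    -- tightness: choose a radius R = n
    obtain ⟨n, hn⟩ : ∃ n : ℕ, D ((Metric.ball (0 : Fin J → ℝ) n)ᶜ) < ENNReal.ofReal ε₁ := by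
      have hanti : Antitone (fun n : ℕ => (Metric.ball (0 : Fin J → ℝ) n)ᶜ) := by
        intro m n hmn
        exact Set.compl_subset_compl.mpr (Metric.ball_subset_ball (by exact_mod_cast hmn))
      have hinter : ⋂ n : ℕ, (Metric.ball (0 : Fin J → ℝ) n)ᶜ = ∅ := by
        rw [← Set.compl_iUnion, Set.compl_empty_iff]
        ext y
        simp only [Set.mem_iUnion, Metric.mem_ball, Set.mem_univ, iff_true]
        obtain ⟨n, hn⟩ := exists_nat_gt (dist y 0)
        exact ⟨n, hn⟩
      have htend := tendsto_measure_iInter_atTop (μ := D)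
        (fun n => (Metric.isOpen_ball.isClosed_compl).measurableSet.nullMeasurableSet)
        hanti ⟨0, measure_ne_top D _⟩
      rw [hinter, measure_empty] at htend
      exact (htend.eventually (gt_mem_nhds (ENNReal.ofReal_pos.mpr hε₁))).exists
    set R : ℝ := (n : ℝ) with hRdef
    have hFclosed : IsClosed {y : Fin J → ℝ | R ≤ ‖y‖} := by
      have : {y : Fin J → ℝ | R ≤ ‖y‖} = (Metric.ball (0 : Fin J → ℝ) R)ᶜ := by
        ext y; simp [Metric.mem_ball, dist_zero_right, not_lt]
      rw [this]
      exact Metric.isOpen_ball.isClosed_compl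
    have hFsubset : {y : Fin J → ℝ | R ≤ ‖y‖} = (Metric.ball (0 : Fin J → ℝ) n)ᶜ := by
      ext y; simp [Metric.mem_ball, dist_zero_right, not_lt, hRdef]
    -- eventually Pr(R ≤ ‖Y K‖) is small
    have htight : ∀ᶠ K in atTop, (Pr {ω | R ≤ ‖Y K ω‖}).toReal ≤ ε₁ := by
      have hlimsup := ProbabilityMeasure.limsup_measure_closed_le_of_tendsto hconv hFclosed
      have hltD : (ν : Measure (Fin J → ℝ)) {y : Fin J → ℝ | R ≤ ‖y‖} < ENNReal.ofReal ε₁ := by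
        rw [hFsubset]; exact hn
      have hev := Filter.eventually_lt_of_limsup_lt (lt_of_le_of_lt hlimsup hltD)
      refine hev.mono fun K hK => ?_
      have hmeq : (μ K : Measure (Fin J → ℝ)) {y : Fin J → ℝ | R ≤ ‖y‖}
          = Pr {ω | R ≤ ‖Y K ω‖} := by
        rw [hμdef]
        simp only [ProbabilityMeasure.coe_mk]
        rw [Measure.map_apply (hYm K) hFclosed.measurableSet]
        rfl
      rw [hmeq] at hK
      exact ENNReal.toReal_le_of_le_ofReal (le_of_lt hε₁) (le_of_lt hK)
    -- uniform continuity on a compact ball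
    obtain ⟨δ₀, hδ₀, hδ₀uc⟩ := Metric.uniformContinuousOn_iff.mp
      ((isCompact_closedBall (0 : Fin J → ℝ) (R + 2)).uniformContinuousOn_of_continuous
        f.continuous.continuousOn) (ε/2) (half_pos hε)
    set δ : ℝ := min 1 (δ₀ / 4) with hδdef
    have hδpos : 0 < δ := lt_min one_pos (by linarith)
    have hδ1 : δ ≤ 1 := min_le_left _ _
    have hδ3 : 3 * δ < δ₀ := by
      have : δ ≤ δ₀ / 4 := min_le_right _ _
      linarith
    -- eventually the remainder is small in probability
    have hrem : ∀ᶠ K in atTop, (Pr {ω | δ ≤ ‖X K ω - c K • Y K ω‖}).toReal ≤ ε₁ := by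
      have := (hR δ hδpos).eventually (ge_mem_nhds hε₁)
      exact this.mono fun K hK => hK
    -- eventually c is close to 1
    have hcev : ∀ᶠ K in atTop, |c K - 1| ≤ δ / (R + 1) := by
      have hpos : 0 < δ / (R + 1) := div_pos hδpos (by positivity)
      have := Metric.tendsto_nhds.mp hc (δ / (R + 1)) hpos
      exact this.mono fun K hK => le_of_lt (by rwa [Real.dist_eq] at hK)
    filter_upwards [htight, hrem, hcev] with K h1 h2 h3
    set A : Set Ω := {ω | ‖Y K ω‖ < R} ∩ {ω | ‖X K ω - c K • Y K ω‖ < δ} with hAdef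
    have hA : MeasurableSet A :=
      (measurableSet_lt (hYm K).norm measurable_const).inter
        (measurableSet_lt ((hXm K).sub ((hYm K).const_smul (c K))).norm measurable_const)
    set φ : Ω → ℝ := fun ω => f (X K ω) - f (Y K ω) with hφdef
    have hφm : Measurable φ :=
      (f.continuous.measurable.comp (hXm K)).sub (f.continuous.measurable.comp (hYm K))
    have hfbd : ∀ x : Fin J → ℝ, |f x| ≤ M := fun x => f.norm_coe_le_norm x
    have hφbd : ∀ ω, |φ ω| ≤ 2 * M := fun ω => by
      calc |φ ω| ≤ |f (X K ω)| + |f (Y K ω)| := abs_sub _ _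
      _ ≤ M + M := add_le_add (hfbd _) (hfbd _)
      _ = 2 * M := by ring
    have hφint : Integrable φ Pr := integrable_of_bdd hφm (2*M) hφbd
    have hXint : Integrable (fun ω => f (X K ω)) Pr :=
      integrable_of_bdd (f.continuous.measurable.comp (hXm K)) M (fun ω => hfbd _)
    have hYint : Integrable (fun ω => f (Y K ω)) Pr :=
      integrable_of_bdd (f.continuous.measurable.comp (hYm K)) M (fun ω => hfbd _)
    have hψint : Integrable (fun ω => |φ ω|) Pr := hφint.abs
    -- pointwise bound on A
    have honA : ∀ ω ∈ A, |φ ω| ≤ ε / 2 := by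
      intro ω hω
      obtain ⟨hω1, hω2⟩ := hω
      simp only [Set.mem_setOf_eq] at hω1 hω2
      have hYball : ‖Y K ω‖ ≤ R + 2 := by linarith
      have hcY : ‖c K • Y K ω - Y K ω‖ ≤ δ := by
        have : c K • Y K ω - Y K ω = (c K - 1) • Y K ω := by
          rw [sub_smul, one_smul]
        rw [this, norm_smul, Real.norm_eq_abs]
        calc |c K - 1| * ‖Y K ω‖ ≤ (δ / (R + 1)) * R :=
              mul_le_mul h3 (le_of_lt hω1) (norm_nonneg _) (by positivity)
        _ ≤ δ := by
            rw [div_mul_eq_mul_div, div_le_iff₀ (by positivity : (0:ℝ) < R + 1)]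
            nlinarith [hδpos, Nat.cast_nonneg (α := ℝ) n]
      have hXY : ‖X K ω - Y K ω‖ < 2 * δ := by
        calc ‖X K ω - Y K ω‖ ≤ ‖X K ω - c K • Y K ω‖ + ‖c K • Y K ω - Y K ω‖ :=
              norm_sub_le_norm_sub_add_norm_sub _ _ _
        _ < δ + δ := by linarith
        _ = 2 * δ := by ring
      have hXball : ‖X K ω‖ ≤ R + 2 := by
        calc ‖X K ω‖ ≤ ‖Y K ω‖ + ‖X K ω - Y K ω‖ := by
              have := norm_add_le (Y K ω) (X K ω - Y K ω)
              simpa using this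
        _ ≤ R + 2 := by linarith
      have hmem1 : X K ω ∈ Metric.closedBall (0 : Fin J → ℝ) (R + 2) := by
        rwa [mem_closedBall_zero_iff]
      have hmem2 : Y K ω ∈ Metric.closedBall (0 : Fin J → ℝ) (R + 2) := by
        rwa [mem_closedBall_zero_iff]
      have := hδ₀uc _ hmem1 _ hmem2 (by
        rw [dist_eq_norm]
        calc ‖X K ω - Y K ω‖ < 2 * δ := hXY
        _ < δ₀ := by linarith)
      rw [Real.dist_eq] at this
      exact le_of_lt this
    -- measure of the complement
    have hcompl : (Pr Aᶜ).toReal ≤ 2 * ε₁ := by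
      have hsub : Aᶜ ⊆ {ω | R ≤ ‖Y K ω‖} ∪ {ω | δ ≤ ‖X K ω - c K • Y K ω‖} := by
        intro ω hω
        rw [hAdef, Set.compl_inter] at hω
        rcases hω with hω | hω <;>
          simp only [Set.mem_compl_iff, Set.mem_setOf_eq] at hω
        · exact Or.inl (not_lt.mp hω)
        · exact Or.inr (not_lt.mp hω)
      have h12 : Pr Aᶜ ≤ Pr {ω | R ≤ ‖Y K ω‖} + Pr {ω | δ ≤ ‖X K ω - c K • Y K ω‖} :=
        le_trans (measure_mono hsub) (measure_union_le _ _)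
      calc (Pr Aᶜ).toReal
          ≤ (Pr {ω | R ≤ ‖Y K ω‖} + Pr {ω | δ ≤ ‖X K ω - c K • Y K ω‖}).toReal :=
            ENNReal.toReal_mono (by finiteness) h12
      _ = (Pr {ω | R ≤ ‖Y K ω‖}).toReal + (Pr {ω | δ ≤ ‖X K ω - c K • Y K ω‖}).toReal :=
            ENNReal.toReal_add (measure_ne_top _ _) (measure_ne_top _ _)
      _ ≤ ε₁ + ε₁ := add_le_add h1 h2
      _ = 2 * ε₁ := by ring
    -- put the pieces together
    have hPrA : (Pr A).toReal ≤ 1 := by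
      simpa using ENNReal.toReal_mono ENNReal.one_ne_top (prob_le_one (μ := Pr) (s := A))
    have hbound : ‖(∫ ω, f (X K ω) ∂Pr) - ∫ ω, f (Y K ω) ∂Pr‖ ≤ ε/2 + 2 * ε₁ * (2 * M) := by
      rw [← integral_sub hXint hYint]
      calc ‖∫ ω, (f (X K ω) - f (Y K ω)) ∂Pr‖ ≤ ∫ ω, ‖f (X K ω) - f (Y K ω)‖ ∂Pr :=
            norm_integral_le_integral_norm _
      _ = ∫ ω, |φ ω| ∂Pr := by simp only [hφdef, Real.norm_eq_abs]
      _ = (∫ ω in A, |φ ω| ∂Pr) + ∫ ω in Aᶜ, |φ ω| ∂Pr := (integral_add_compl hA hψint).symm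
      _ ≤ (Pr A).toReal * (ε/2) + (Pr Aᶜ).toReal * (2 * M) := by
          refine add_le_add ?_ ?_
          · calc ∫ ω in A, |φ ω| ∂Pr ≤ ∫ _ in A, (ε/2) ∂Pr :=
                  setIntegral_mono_on hψint.integrableOn (integrable_const _).integrableOn hA honA
            _ = (Pr A).toReal * (ε/2) := by rw [setIntegral_const]; rfl
          · calc ∫ ω in Aᶜ, |φ ω| ∂Pr ≤ ∫ _ in Aᶜ, (2*M) ∂Pr :=
                  setIntegral_mono_on hψint.integrableOn (integrable_const _).integrableOn
                    hA.compl (fun ω _ => hφbd ω)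
            _ = (Pr Aᶜ).toReal * (2*M) := by rw [setIntegral_const]; rfl
      _ ≤ 1 * (ε/2) + (2 * ε₁) * (2 * M) := by
          refine add_le_add (mul_le_mul_of_nonneg_right hPrA (by linarith)) ?_
          exact mul_le_mul_of_nonneg_right hcompl (by linarith)
      _ = ε/2 + 2 * ε₁ * (2 * M) := by ring
    have hfinal : ε/2 + 2 * ε₁ * (2 * M) < ε := by
      have hM1 : (0:ℝ) < M + 1 := by linarith
      have : 2 * ε₁ * (2 * M) < ε / 2 := by
        have hεM : 2 * ε₁ * (2 * M) = ε * M / (2 * (M + 1)) := by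
          rw [hε₁def]; field_simp; ring
        rw [hεM, div_lt_div_iff₀ (by linarith) (by norm_num)]
        nlinarith [hε, hM0]
      linarith
    exact lt_of_le_of_lt hbound hfinal
  have : (fun K => ∫ ω, f (X K ω) ∂Pr)
      = fun K => (∫ ω, f (Y K ω) ∂Pr) + ((∫ ω, f (X K ω) ∂Pr) - ∫ ω, f (Y K ω) ∂Pr) := by
    funext K; ring
  rw [this]
  simpa using (hY f).add hdiff

end Slutsky

section Limits

lemma tendsto_sqrt_atTop' : Tendsto Real.sqrt atTop atTop :=
  tendsto_atTop_atTop_of_monotone (fun _ _ h => Real.sqrt_le_sqrt h)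
    (fun b => ⟨b^2, by rw [Real.sqrt_sq_eq_abs]; exact le_abs_self b⟩)

lemma c_tendsto_one {a : ℕ → ℝ} (ha0 : ∀ K, 0 < a K) (hatop : Tendsto a atTop atTop) :
    Tendsto (fun K => Real.sqrt (a K + 1) / Real.sqrt (a K)) atTop (𝓝 1) := by
  have h1 : Tendsto (fun K => (a K + 1) / a K) atTop (𝓝 1) := by
    have h2 : Tendsto (fun K => 1 + (a K)⁻¹) atTop (𝓝 (1 + 0)) :=
      tendsto_const_nhds.add hatop.inv_tendsto_atTop
    rw [add_zero] at h2
    refine h2.congr fun K => ?_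
    have := ne_of_gt (ha0 K)
    field_simp
  have h3 := (Real.continuous_sqrt.tendsto 1).comp h1
  rw [Real.sqrt_one] at h3
  refine h3.congr fun K => ?_
  exact Real.sqrt_div (by linarith [ha0 K]) _

lemma E_tendsto_zero {J : ℕ} {a : ℕ → ℝ} (ha : ∀ K, (J:ℝ) < a K)
    (hatop : Tendsto a atTop atTop) :
    Tendsto (fun K => Real.sqrt (a K + 1) * ((J:ℝ)+1) / (a K - J)) atTop (𝓝 0) := by
  have hJ0 : (0:ℝ) ≤ J := Nat.cast_nonneg J
  have hs : Tendsto (fun K => Real.sqrt (a K + 1)) atTop atTop :=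
    tendsto_sqrt_atTop'.comp (tendsto_atTop_add_const_right atTop 1 hatop)
  have hinv : Tendsto (fun K => (Real.sqrt (a K + 1))⁻¹) atTop (𝓝 0) := hs.inv_tendsto_atTop
  have hden : Tendsto (fun K => a K - (J:ℝ)) atTop atTop :=
    tendsto_atTop_add_const_right atTop (-(J:ℝ)) hatop
  have hfrac : Tendsto (fun K => (a K + 1) / (a K - (J:ℝ))) atTop (𝓝 1) := by
    have h2 : Tendsto (fun K => 1 + ((J:ℝ)+1) * (a K - (J:ℝ))⁻¹) atTop
        (𝓝 (1 + ((J:ℝ)+1) * 0)) :=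
      tendsto_const_nhds.add (hden.inv_tendsto_atTop.const_mul _)
    rw [mul_zero, add_zero] at h2
    refine h2.congr fun K => ?_
    have hne : a K - (J:ℝ) ≠ 0 := ne_of_gt (by linarith [ha K])
    field_simp
    ring
  have h4 : Tendsto (fun K => ((J:ℝ)+1) * ((Real.sqrt (a K + 1))⁻¹ * ((a K + 1)/(a K - (J:ℝ)))))
      atTop (𝓝 (((J:ℝ)+1) * (0 * 1))) := (hinv.mul hfrac).const_mul _
  rw [zero_mul, mul_zero] at h4
  refine h4.congr fun K => ?_
  have hpos : (0:ℝ) < a K + 1 := by linarith [ha K]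
  set u := Real.sqrt (a K + 1) with hu
  have hu0 : 0 < u := Real.sqrt_pos.mpr hpos
  have hsq : u * u = a K + 1 := Real.mul_self_sqrt (le_of_lt hpos)
  have hne : a K - (J:ℝ) ≠ 0 := ne_of_gt (by linarith [ha K])
  rw [← hsq]
  field_simp

/-- Chebyshev-type bound. -/
lemma cheb {Ω : Type*} [MeasurableSpace Ω] {Pr : Measure Ω} [IsProbabilityMeasure Pr]
    {W : Ω → ℝ} (hm : Measurable W) (C B : ℝ) (hbd : ∀ ω, |W ω| ≤ B)
    (hI : ∫ ω, (W ω)^2 ∂Pr ≤ C) {t : ℝ} (ht : 0 < t) :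
    (Pr {ω | t ≤ |W ω|}).toReal ≤ C / t^2 := by
  have hseteq : {ω | t ≤ |W ω|} = {ω | t^2 ≤ (W ω)^2} := by
    ext ω
    simp only [Set.mem_setOf_eq]
    rw [← sq_abs (W ω)]
    exact ⟨fun h => pow_le_pow_left₀ (le_of_lt ht) h 2,
      fun h => le_of_pow_le_pow_left₀ two_ne_zero (abs_nonneg _) h⟩
  have hint : Integrable (fun ω => (W ω)^2) Pr := by
    refine integrable_of_bdd (hm.pow_const 2) (B^2) (fun ω => ?_)
    rw [abs_pow, sq_abs, ← sq_abs]
    exact pow_le_pow_left₀ (abs_nonneg _) (hbd ω) 2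
  have hmar := mul_meas_ge_le_integral_of_nonneg
    (ae_of_all _ fun ω => sq_nonneg (W ω)) hint (t^2)
  rw [hseteq, le_div_iff₀ (by positivity)]
  calc (Pr {ω | t^2 ≤ (W ω)^2}).toReal * t^2
      = t^2 * (Pr {x | t^2 ≤ (W x)^2}).toReal := mul_comm _ _
  _ ≤ ∫ ω, (W ω)^2 ∂Pr := hmar
  _ ≤ C := hI

end Limits

/-- **Corollary 2.** If `α_K > J`, `α_K → ∞`, `α_K/K → 0` and
`√(α_K)(Π_K − (α_K·α̃ − 1_J)/(α_K − J)) ⇝ N(0, diag(α̃) − α̃α̃ᵀ)`, then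
`(√(α_K + 1)/K)(T_K − K·α̃) ⇝ N(0, diag(α̃) − α̃α̃ᵀ)`. -/
theorem dirichlet_multinomial_clt_mixing_dominates
    {Ω : Type*} [MeasurableSpace Ω] (Pr : Measure Ω) [IsProbabilityMeasure Pr]
    (J : ℕ) (hJ : 2 ≤ J) (α : Fin J → ℝ) (hα : α ∈ stdSimplex ℝ (Fin J))
    (a : ℕ → ℝ) (ha : ∀ K, (J : ℝ) < a K)
    (hatop : Tendsto a atTop atTop)
    (haK : Tendsto (fun K : ℕ => a K / K) atTop (𝓝 0))
    (Pi : ℕ → Ω → Fin J → ℝ) (hPimeas : ∀ K, Measurable (Pi K))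
    (hPival : ∀ K ω, Pi K ω ∈ stdSimplex ℝ (Fin J))
    (D : Measure (Fin J → ℝ))
    (hD : IsCenteredGaussian D (Matrix.diagonal α - Matrix.vecMulVec α α))
    (hPiconv : TendstoInDistr Pr
      (fun K ω j => Real.sqrt (a K) * (Pi K ω j - (a K * α j - 1) / (a K - J))) D)
    (U : ℕ → ℕ → Ω → ℝ) (hUmeas : ∀ K k, Measurable (U K k))
    (hUunif : ∀ K k, Pr.map (U K k) = volume.restrict (Set.Icc (0:ℝ) 1))
    (hUiid : ∀ K, iIndepFun (U K) Pr)
    (hUPiindep : ∀ K, IndepFun (fun ω k => U K k ω) (Pi K) Pr) :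
    TendstoInDistr Pr
      (fun K ω j =>
        Real.sqrt (a K + 1) / K * (countVec K (U K) (Pi K) ω j - K * α j)) D := by

  classical
  haveI : IsProbabilityMeasure D := hD.1
  haveI : Nonempty (Fin J) := ⟨⟨0, by omega⟩⟩
  have hJ0 : (0:ℝ) ≤ J := Nat.cast_nonneg J
  have ha0 : ∀ K, (0:ℝ) < a K := fun K => lt_of_le_of_lt hJ0 (ha K)
  have haJ : ∀ K, (0:ℝ) < a K - J := fun K => by linarith [ha K]
  have hα01 : ∀ j, 0 ≤ α j ∧ α j ≤ 1 := fun j =>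
    ⟨hα.1 j, by simpa using simplex_partial_le_one hα {j}⟩
  set c : ℕ → ℝ := fun K => Real.sqrt (a K + 1) / Real.sqrt (a K) with hcdef
  -- measurability of the count vectors
  have hT : ∀ K j, Measurable (fun ω => countVec K (U K) (Pi K) ω j) := by
    intro K j
    simp only [countVec]
    exact Finset.measurable_sum _ (fun k _ => chi_meas (hUmeas K) (hPimeas K) k j)
  have hXm : ∀ K, Measurable (fun ω j => Real.sqrt (a K + 1) / K
      * (countVec K (U K) (Pi K) ω j - K * α j)) := fun K =>
    measurable_pi_lambda _ fun j => (((hT K j).sub measurable_const).const_mul _)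
  have hYm : ∀ K, Measurable (fun ω j => Real.sqrt (a K)
      * (Pi K ω j - (a K * α j - 1) / (a K - J))) := fun K =>
    measurable_pi_lambda _ fun j =>
      ((((measurable_pi_apply j).comp (hPimeas K)).sub measurable_const).const_mul _)
  have hc : Tendsto c atTop (𝓝 1) := c_tendsto_one ha0 hatop
  refine slutsky hYm hXm hPiconv hc ?_
  -- the remainder tends to zero in probability
  intro δ hδ
  set E : ℕ → ℝ := fun K => Real.sqrt (a K + 1) * ((J:ℝ)+1) / (a K - J) with hEdef
  have hE0 : Tendsto E atTop (𝓝 0) := E_tendsto_zero ha hatop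
  set b : ℕ → ℝ := fun K => (J:ℝ) * (4 / δ^2 * ((a K + 1)/K)) with hbdef
  have hb0 : Tendsto b atTop (𝓝 0) := by
    have h1 : Tendsto (fun K : ℕ => (a K + 1)/(K:ℝ)) atTop (𝓝 0) := by
      have h2 : Tendsto (fun K : ℕ => a K / K + 1 / K) atTop (𝓝 (0 + 0)) :=
        haK.add tendsto_one_div_atTop_nhds_zero_nat
      rw [add_zero] at h2
      exact h2.congr fun K => (add_div _ _ _).symm
    have h3 := (h1.const_mul (4 / δ^2)).const_mul (J:ℝ)
    rw [mul_zero, mul_zero] at h3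
    exact h3
  refine squeeze_zero' (Eventually.of_forall fun K => ENNReal.toReal_nonneg) ?_ hb0
  filter_upwards [hE0.eventually (ge_mem_nhds (half_pos hδ)), eventually_ge_atTop 1]
    with K hEK hK1
  have hKpos : (0:ℝ) < K := by exact_mod_cast hK1
  have hsApos : (0:ℝ) < a K + 1 := by linarith [ha0 K]
  have hsA : (0:ℝ) < Real.sqrt (a K + 1) := Real.sqrt_pos.mpr hsApos
  have hs0 : (0:ℝ) < Real.sqrt (a K) := Real.sqrt_pos.mpr (ha0 K)
  set W : Fin J → Ω → ℝ := fun j ω =>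
    Real.sqrt (a K + 1) / K * (countVec K (U K) (Pi K) ω j - K * Pi K ω j) with hWdef
  -- decomposition identity and bound
  have hid : ∀ ω (j : Fin J),
      Real.sqrt (a K + 1) / K * (countVec K (U K) (Pi K) ω j - K * α j)
        - c K * (Real.sqrt (a K) * (Pi K ω j - (a K * α j - 1) / (a K - J)))
      = W j ω + Real.sqrt (a K + 1) * (((J:ℝ) * α j - 1) / (a K - J)) := by
    intro ω j
    have hne1 : Real.sqrt (a K) ≠ 0 := ne_of_gt hs0
    have hne2 : (K:ℝ) ≠ 0 := ne_of_gt hKpos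
    have hne3 : a K - (J:ℝ) ≠ 0 := ne_of_gt (haJ K)
    rw [hcdef, hWdef]
    field_simp
    ring
  have hbound : ∀ ω (j : Fin J),
      |Real.sqrt (a K + 1) / K * (countVec K (U K) (Pi K) ω j - K * α j)
        - c K * (Real.sqrt (a K) * (Pi K ω j - (a K * α j - 1) / (a K - J)))|
      ≤ |W j ω| + E K := by
    intro ω j
    rw [hid ω j]
    refine le_trans (abs_add_le _ _) (add_le_add le_rfl ?_)
    have hnum : |(J:ℝ) * α j - 1| ≤ (J:ℝ) + 1 := by
      rw [abs_le]
      constructor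
      · nlinarith [(hα01 j).1, (hα01 j).2]
      · nlinarith [(hα01 j).1, (hα01 j).2, hJ0]
    have habs : |Real.sqrt (a K + 1) * (((J:ℝ) * α j - 1) / (a K - J))|
        = Real.sqrt (a K + 1) * (|(J:ℝ) * α j - 1| / (a K - J)) := by
      rw [abs_mul, abs_of_pos hsA, abs_div, abs_of_pos (haJ K)]
    have hEK' : E K = Real.sqrt (a K + 1) * (((J:ℝ)+1) / (a K - J)) := by
      simp only [hEdef]; rw [mul_div_assoc]
    rw [habs, hEK']
    exact mul_le_mul_of_nonneg_left ((div_le_div_iff_of_pos_right (haJ K)).mpr hnum) (le_of_lt hsA)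
  -- bounds on the counts
  have hTbd : ∀ (j : Fin J) ω, 0 ≤ countVec K (U K) (Pi K) ω j
      ∧ countVec K (U K) (Pi K) ω j ≤ K := by
    intro j ω
    constructor
    · simp only [countVec]
      exact Finset.sum_nonneg fun k _ => by split <;> norm_num
    · simp only [countVec]
      calc ∑ k ∈ Finset.range K, (if U K k ω ∈ Pint (Pi K ω) j then (1:ℝ) else 0)
          ≤ ∑ k ∈ Finset.range K, (1:ℝ) := Finset.sum_le_sum fun k _ => by split <;> norm_num
      _ = K := by simp
  have hPone : ∀ (j : Fin J) ω, 0 ≤ Pi K ω j ∧ Pi K ω j ≤ 1 := fun j ω =>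
    ⟨(hPival K ω).1 j, by simpa using simplex_partial_le_one (hPival K ω) {j}⟩
  have hWm : ∀ j : Fin J, Measurable (W j) := fun j =>
    (((hT K j).sub (((measurable_pi_apply j).comp (hPimeas K)).const_mul (K:ℝ))).const_mul _)
  have hWbd : ∀ (j : Fin J) ω, |W j ω| ≤ Real.sqrt (a K + 1) / K * K := by
    intro j ω
    rw [hWdef]
    simp only []
    rw [abs_mul, abs_of_pos (div_pos hsA hKpos)]
    refine mul_le_mul_of_nonneg_left ?_ (le_of_lt (div_pos hsA hKpos))
    rw [abs_le]
    constructor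
    · nlinarith [(hTbd j ω).1, (hPone j ω).2]
    · nlinarith [(hTbd j ω).2, (hPone j ω).1]
  have hWint : ∀ j : Fin J, ∫ ω, (W j ω)^2 ∂Pr ≤ (a K + 1)/K := by
    intro j
    have hWsq : ∀ ω, (W j ω)^2 = (Real.sqrt (a K + 1) / K)^2
        * (countVec K (U K) (Pi K) ω j - K * Pi K ω j)^2 := fun ω => by
      rw [hWdef]; rw [mul_pow]
    calc ∫ ω, (W j ω)^2 ∂Pr
        = (Real.sqrt (a K + 1) / K)^2
          * ∫ ω, (countVec K (U K) (Pi K) ω j - K * Pi K ω j)^2 ∂Pr := by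
          simp only [hWsq]
          exact integral_const_mul _ _
    _ ≤ (Real.sqrt (a K + 1) / K)^2 * K := by
          refine mul_le_mul_of_nonneg_left ?_ (sq_nonneg _)
          exact moment_bound (hUmeas K) (hUunif K) (hUiid K) (hPimeas K) (hPival K)
            (hUPiindep K) K j
    _ = (a K + 1)/K := by
          rw [div_pow, Real.sq_sqrt (le_of_lt hsApos)]
          field_simp
  have hcheb : ∀ j : Fin J, (Pr {ω | δ/2 ≤ |W j ω|}).toReal ≤ 4/δ^2 * ((a K + 1)/K) := by
    intro j
    have h := cheb (Pr := Pr) (hWm j) ((a K + 1)/K) (Real.sqrt (a K + 1) / K * K)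
      (hWbd j) (hWint j) (half_pos hδ)
    have heq : ((a K + 1)/K) / (δ/2)^2 = 4/δ^2 * ((a K + 1)/K) := by
      have hδne : δ ≠ 0 := ne_of_gt hδ
      field_simp
      ring
    rwa [heq] at h
  -- union bound
  have hsub : {ω : Ω | δ ≤ ‖(fun j => Real.sqrt (a K + 1) / K
        * (countVec K (U K) (Pi K) ω j - K * α j))
      - c K • (fun j => Real.sqrt (a K) * (Pi K ω j - (a K * α j - 1) / (a K - J)))‖}
      ⊆ ⋃ j : Fin J, {ω | δ/2 ≤ |W j ω|} := by
    intro ω hω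
    simp only [Set.mem_setOf_eq] at hω
    by_contra hnot
    simp only [Set.mem_iUnion, Set.mem_setOf_eq, not_exists, not_le] at hnot
    have hlt : ‖(fun j => Real.sqrt (a K + 1) / K
          * (countVec K (U K) (Pi K) ω j - K * α j))
        - c K • (fun j => Real.sqrt (a K) * (Pi K ω j - (a K * α j - 1) / (a K - J)))‖ < δ := by
      rw [pi_norm_lt_iff hδ]
      intro j
      rw [Real.norm_eq_abs]
      calc |Real.sqrt (a K + 1) / K * (countVec K (U K) (Pi K) ω j - K * α j)
            - c K * (Real.sqrt (a K) * (Pi K ω j - (a K * α j - 1) / (a K - J)))|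
          ≤ |W j ω| + E K := hbound ω j
      _ < δ/2 + δ/2 := add_lt_add_of_lt_of_le (hnot j) hEK
      _ = δ := by ring
    exact absurd hω (not_le.mpr hlt)
  calc (Pr {ω : Ω | δ ≤ ‖(fun j => Real.sqrt (a K + 1) / K
          * (countVec K (U K) (Pi K) ω j - K * α j))
        - c K • (fun j => Real.sqrt (a K) * (Pi K ω j - (a K * α j - 1) / (a K - J)))‖}).toReal
      ≤ (Pr (⋃ j : Fin J, {ω | δ/2 ≤ |W j ω|})).toReal :=
        ENNReal.toReal_mono (measure_ne_top _ _) (measure_mono hsub)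
  _ ≤ (∑ j : Fin J, Pr {ω | δ/2 ≤ |W j ω|}).toReal :=
        ENNReal.toReal_mono (ENNReal.sum_lt_top.mpr fun j _ => measure_lt_top _ _).ne
          (measure_iUnion_fintype_le _ _)
  _ = ∑ j : Fin J, (Pr {ω | δ/2 ≤ |W j ω|}).toReal :=
        ENNReal.toReal_sum (fun j _ => measure_ne_top _ _)
  _ ≤ ∑ _j : Fin J, (4/δ^2 * ((a K + 1)/K)) := Finset.sum_le_sum (fun j _ => hcheb j)
  _ = b K := by
        rw [Finset.sum_const, Finset.card_univ, Fintype.card_fin, nsmul_eq_mul, hbdef]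

end
end

section
/- Let J ≥ 2, let α ∈ S^{J-1}, and fix 1 ≤ j ≤ J and K ∈ ℕ. Let Π be an integrable random vector taking values in S^{J-1} and let U_1, …, U_K be i.i.d. Uniform(0,1) random variables independent of Π. Define S = K^{-1/2}·Σ_{k=1}^K 1(U_k ∈ P_j(Π) \ P_j(α)). Then E(S) ≤ 2·√(K·J)·E(‖Π − α‖), where ‖·‖ is the Euclidean norm. -/
open MeasureTheory ProbabilityTheory Filter Topology

noncomputable section

private lemma sum_abs_sqrt_bound {J : ℕ} (x : Fin J → ℝ) (s : Finset (Fin J)) :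
    |∑ ℓ ∈ s, x ℓ| ≤ Real.sqrt J * Real.sqrt (∑ ℓ, x ℓ ^ 2) := by
  have h1 : |∑ ℓ ∈ s, x ℓ| ≤ ∑ ℓ, |x ℓ| :=
    (Finset.abs_sum_le_sum_abs _ _).trans
      (Finset.sum_le_sum_of_subset_of_nonneg (Finset.subset_univ s)
        (fun _ _ _ => abs_nonneg _))
  refine h1.trans ?_
  have h2 : (∑ ℓ, |x ℓ|) ^ 2 ≤ (J : ℝ) * ∑ ℓ, x ℓ ^ 2 := by
    have := sq_sum_le_card_mul_sum_sq (s := (Finset.univ : Finset (Fin J)))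
      (f := fun ℓ => |x ℓ|)
    simpa [sq_abs] using this
  have h3 : (0:ℝ) ≤ ∑ ℓ, |x ℓ| := Finset.sum_nonneg fun _ _ => abs_nonneg _
  calc ∑ ℓ, |x ℓ| = Real.sqrt ((∑ ℓ, |x ℓ|) ^ 2) := (Real.sqrt_sq h3).symm
    _ ≤ Real.sqrt ((J : ℝ) * ∑ ℓ, x ℓ ^ 2) := Real.sqrt_le_sqrt h2
    _ = _ := Real.sqrt_mul (Nat.cast_nonneg J) _

private lemma Pint_diff_subset {J : ℕ} (α h : Fin J → ℝ) (j : Fin J) :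
    Pint h j \ Pint α j ⊆
      Set.Ioc (min (∑ ℓ ∈ Finset.Iio j, h ℓ) (∑ ℓ ∈ Finset.Iio j, α ℓ))
              (max (∑ ℓ ∈ Finset.Iio j, h ℓ) (∑ ℓ ∈ Finset.Iio j, α ℓ)) ∪
      Set.Ioc (min (∑ ℓ ∈ Finset.Iic j, h ℓ) (∑ ℓ ∈ Finset.Iic j, α ℓ))
              (max (∑ ℓ ∈ Finset.Iic j, h ℓ) (∑ ℓ ∈ Finset.Iic j, α ℓ)) := by
  intro x hx
  obtain ⟨hx1, hx2⟩ := hx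
  by_cases hj : j.val = 0
  · simp only [Pint, hj, if_true, Set.mem_Icc] at hx1 hx2
    push_neg at hx2
    right
    exact ⟨lt_of_le_of_lt (min_le_right _ _) (hx2 hx1.1),
      le_trans hx1.2 (le_max_left _ _)⟩
  · simp only [Pint, hj, if_false, Set.mem_Ioc] at hx1 hx2
    push_neg at hx2
    by_cases hcase : (∑ ℓ ∈ Finset.Iio j, α ℓ) < x
    · right
      exact ⟨lt_of_le_of_lt (min_le_right _ _) (hx2 hcase),
        le_trans hx1.2 (le_max_left _ _)⟩
    · left
      push_neg at hcase
      exact ⟨lt_of_le_of_lt (min_le_left _ _) hx1.1,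
        le_trans hcase (le_max_right _ _)⟩

private lemma volume_Pint_diff {J : ℕ} (α h : Fin J → ℝ) (j : Fin J) :
    volume (Pint h j \ Pint α j) ≤
      ENNReal.ofReal (|∑ ℓ ∈ Finset.Iio j, (h ℓ - α ℓ)| + |∑ ℓ ∈ Finset.Iic j, (h ℓ - α ℓ)|) := by
  have hsub := Pint_diff_subset α h j
  calc volume (Pint h j \ Pint α j)
      ≤ volume (Set.Ioc (min (∑ ℓ ∈ Finset.Iio j, h ℓ) (∑ ℓ ∈ Finset.Iio j, α ℓ))
              (max (∑ ℓ ∈ Finset.Iio j, h ℓ) (∑ ℓ ∈ Finset.Iio j, α ℓ)) ∪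
          Set.Ioc (min (∑ ℓ ∈ Finset.Iic j, h ℓ) (∑ ℓ ∈ Finset.Iic j, α ℓ))
              (max (∑ ℓ ∈ Finset.Iic j, h ℓ) (∑ ℓ ∈ Finset.Iic j, α ℓ))) :=
        measure_mono hsub
    _ ≤ _ := by
        refine (measure_union_le _ _).trans ?_
        rw [Real.volume_Ioc, Real.volume_Ioc, max_sub_min_eq_abs, max_sub_min_eq_abs]
        rw [← ENNReal.ofReal_add (abs_nonneg _) (abs_nonneg _)]
        simp [Finset.sum_sub_distrib, abs_sub_comm]

private lemma measurableSet_Pint {J : ℕ} (h : Fin J → ℝ) (j : Fin J) :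
    MeasurableSet (Pint h j) := by
  unfold Pint; split_ifs
  exacts [measurableSet_Icc, measurableSet_Ioc]

open Classical in
/-- For `S = K^{-1/2}·Σ_{k=1}^K 1(U_k ∈ P_j(Π) \ P_j(α))` one has
`E(S) ≤ 2·√(K·J)·E‖Π − α‖`. -/
theorem expectation_sdiff_indicator_sum_le
    {Ω : Type*} [MeasurableSpace Ω] (Pr : Measure Ω) [IsProbabilityMeasure Pr]
    (J : ℕ) (hJ : 2 ≤ J) (α : Fin J → ℝ) (hα : α ∈ stdSimplex ℝ (Fin J))
    (j : Fin J) (K : ℕ)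
    (Pi : Ω → Fin J → ℝ) (hPimeas : Measurable Pi)
    (hPival : ∀ ω, Pi ω ∈ stdSimplex ℝ (Fin J))
    (hPiint : Integrable Pi Pr)
    (U : ℕ → Ω → ℝ) (hUmeas : ∀ k, Measurable (U k))
    (hUunif : ∀ k, Pr.map (U k) = volume.restrict (Set.Icc (0:ℝ) 1))
    (hUiid : iIndepFun U Pr)
    (hUPiindep : IndepFun (fun ω k => U k ω) Pi Pr) :
    ∫ ω, (∑ k ∈ Finset.range K,
        if U k ω ∈ Pint (Pi ω) j \ Pint α j then (1:ℝ) else 0) / Real.sqrt K ∂Pr ≤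
      2 * Real.sqrt (K * J) * ∫ ω, Real.sqrt (∑ ℓ, (Pi ω ℓ - α ℓ) ^ 2) ∂Pr := by
  classical
  set G : Ω → ℝ := fun ω => Real.sqrt (∑ ℓ, (Pi ω ℓ - α ℓ) ^ 2) with hGdef
  have hGmeas : Measurable G := by
    apply Real.continuous_sqrt.measurable.comp
    exact Finset.measurable_sum _ fun ℓ _ => ((hPimeas.eval).sub measurable_const).pow_const 2
  have hcoord : ∀ (x : Fin J → ℝ), x ∈ stdSimplex ℝ (Fin J) → ∀ ℓ, x ℓ ∈ Set.Icc (0:ℝ) 1 := by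
    intro x hx ℓ
    refine ⟨hx.1 ℓ, ?_⟩
    calc x ℓ ≤ ∑ i, x i := Finset.single_le_sum (fun i _ => hx.1 i) (Finset.mem_univ ℓ)
      _ = 1 := hx.2
  have hGbdd : ∀ ω, G ω ≤ Real.sqrt J := by
    intro ω
    have : (∑ ℓ, (Pi ω ℓ - α ℓ) ^ 2) ≤ (J : ℝ) := by
      calc (∑ ℓ, (Pi ω ℓ - α ℓ) ^ 2) ≤ ∑ _ℓ : Fin J, (1:ℝ) := by
            refine Finset.sum_le_sum fun ℓ _ => ?_
            have h1 := hcoord _ (hPival ω) ℓ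
            have h2 := hcoord _ hα ℓ
            nlinarith [h1.1, h1.2, h2.1, h2.2]
        _ = (J : ℝ) := by simp
    exact Real.sqrt_le_sqrt this |>.trans (by rw [Real.sqrt_le_sqrt_iff (Nat.cast_nonneg _)] <;> simp)
  have hGint : Integrable G Pr := by
    refine (integrable_const (Real.sqrt J)).mono' hGmeas.aestronglyMeasurable ?_
    refine ae_of_all _ fun ω => ?_
    rw [Real.norm_eq_abs, abs_of_nonneg (Real.sqrt_nonneg _)]
    exact hGbdd ω
  -- the measurable set in the product space
  set s2 : Set (ℝ × (Fin J → ℝ)) := {p | p.1 ∈ Pint p.2 j \ Pint α j} with hs2def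
  have hb : Measurable (fun p : ℝ × (Fin J → ℝ) => ∑ ℓ ∈ Finset.Iic j, p.2 ℓ) :=
    Finset.measurable_sum _ fun ℓ _ => measurable_snd.eval
  have ha : Measurable (fun p : ℝ × (Fin J → ℝ) => ∑ ℓ ∈ Finset.Iio j, p.2 ℓ) :=
    Finset.measurable_sum _ fun ℓ _ => measurable_snd.eval
  have hs2 : MeasurableSet s2 := by
    have hA : MeasurableSet {p : ℝ × (Fin J → ℝ) | p.1 ∈ Pint p.2 j} := by
      simp only [Pint]
      split_ifs with h
      · simp only [Set.mem_Icc]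
        exact (measurableSet_le measurable_const measurable_fst).inter
          (measurableSet_le measurable_fst hb)
      · simp only [Set.mem_Ioc]
        exact (measurableSet_lt ha measurable_fst).inter
          (measurableSet_le measurable_fst hb)
    have hB : MeasurableSet {p : ℝ × (Fin J → ℝ) | p.1 ∈ Pint α j} :=
      measurable_fst (measurableSet_Pint α j)
    have : s2 = {p : ℝ × (Fin J → ℝ) | p.1 ∈ Pint p.2 j} \
        {p : ℝ × (Fin J → ℝ) | p.1 ∈ Pint α j} := by
      ext p; simp [hs2def, Set.mem_diff]
    rw [this]
    exact hA.diff hB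
  set F : ℝ × (Fin J → ℝ) → ℝ := s2.indicator (fun _ => (1:ℝ)) with hFdef
  have hFmeas : Measurable F := measurable_const.indicator hs2
  set μU : Measure ℝ := volume.restrict (Set.Icc (0:ℝ) 1) with hμU
  haveI : IsProbabilityMeasure μU := by
    constructor
    rw [hμU, Measure.restrict_apply_univ]
    simp [Real.volume_Icc]
  haveI : IsProbabilityMeasure (Pr.map Pi) := Measure.isProbabilityMeasure_map hPimeas.aemeasurable
  -- per-k bound
  have key : ∀ k, ∫ ω, (if U k ω ∈ Pint (Pi ω) j \ Pint α j then (1:ℝ) else 0) ∂Pr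
      ≤ 2 * Real.sqrt J * ∫ ω, G ω ∂Pr := by
    intro k
    have hind : IndepFun (U k) Pi Pr :=
      hUPiindep.comp (measurable_pi_apply k) measurable_id
    have hmap : Pr.map (fun ω => (U k ω, Pi ω)) = (Pr.map (U k)).prod (Pr.map Pi) :=
      (indepFun_iff_map_prod_eq_prod_map_map (hUmeas k).aemeasurable
        hPimeas.aemeasurable).mp hind
    have hFi : Integrable F (μU.prod (Pr.map Pi)) :=
      (integrable_const (1:ℝ)).indicator hs2
    have hptw : ∀ ω, (if U k ω ∈ Pint (Pi ω) j \ Pint α j then (1:ℝ) else 0)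
        = F (U k ω, Pi ω) := by
      intro ω; simp only [hFdef, Set.indicator_apply, hs2def, Set.mem_setOf_eq]
    have hinner : ∀ h : Fin J → ℝ,
        ∫ u, F (u, h) ∂μU ≤ 2 * Real.sqrt J * Real.sqrt (∑ ℓ, (h ℓ - α ℓ) ^ 2) := by
      intro h
      have hSet : MeasurableSet (Pint h j \ Pint α j) :=
        (measurableSet_Pint h j).diff (measurableSet_Pint α j)
      have heq : (fun u => F (u, h)) = (Pint h j \ Pint α j).indicator (fun _ => (1:ℝ)) := by
        funext u
        simp only [hFdef, Set.indicator_apply, hs2def, Set.mem_setOf_eq]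
      rw [heq]
      have : ∫ u, (Pint h j \ Pint α j).indicator (fun _ => (1:ℝ)) u ∂μU
          = (μU (Pint h j \ Pint α j)).toReal := by
        exact integral_indicator_one (μ := μU) hSet
      rw [this]
      have hle : μU (Pint h j \ Pint α j) ≤
          ENNReal.ofReal (|∑ ℓ ∈ Finset.Iio j, (h ℓ - α ℓ)| + |∑ ℓ ∈ Finset.Iic j, (h ℓ - α ℓ)|) :=
        (Measure.restrict_apply_le _ _).trans (volume_Pint_diff α h j)
      refine (ENNReal.toReal_le_of_le_ofReal (by positivity) hle).trans ?_
      have b1 := sum_abs_sqrt_bound (fun ℓ => h ℓ - α ℓ) (Finset.Iio j)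
      have b2 := sum_abs_sqrt_bound (fun ℓ => h ℓ - α ℓ) (Finset.Iic j)
      nlinarith [b1, b2]
    calc ∫ ω, (if U k ω ∈ Pint (Pi ω) j \ Pint α j then (1:ℝ) else 0) ∂Pr
        = ∫ ω, F (U k ω, Pi ω) ∂Pr := by simp_rw [hptw]
      _ = ∫ p, F p ∂(Pr.map (fun ω => (U k ω, Pi ω))) :=
          (integral_map ((hUmeas k).prodMk hPimeas).aemeasurable
            hFmeas.aestronglyMeasurable).symm
      _ = ∫ p, F p ∂(μU.prod (Pr.map Pi)) := by rw [hmap, hUunif k]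
      _ = ∫ h, ∫ u, F (u, h) ∂μU ∂(Pr.map Pi) := integral_prod_symm F hFi
      _ ≤ ∫ h, 2 * Real.sqrt J * Real.sqrt (∑ ℓ, (h ℓ - α ℓ) ^ 2) ∂(Pr.map Pi) := by
          refine integral_mono_of_nonneg (ae_of_all _ fun h => ?_) ?_ (ae_of_all _ hinner)
          · exact integral_nonneg fun u => Set.indicator_nonneg (fun _ _ => zero_le_one) _
          · have hgm : Measurable (fun h : Fin J → ℝ =>
                2 * Real.sqrt J * Real.sqrt (∑ ℓ, (h ℓ - α ℓ) ^ 2)) := by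
              apply Measurable.const_mul
              apply Real.continuous_sqrt.measurable.comp
              exact Finset.measurable_sum _ fun ℓ _ =>
                ((measurable_pi_apply ℓ).sub measurable_const).pow_const 2
            rw [integrable_map_measure hgm.aestronglyMeasurable hPimeas.aemeasurable]
            exact (hGint.const_mul (2 * Real.sqrt J))
      _ = 2 * Real.sqrt J * ∫ ω, G ω ∂Pr := by
          rw [integral_map hPimeas.aemeasurable]
          · rw [integral_const_mul]
          · apply Measurable.aestronglyMeasurable
            apply Measurable.const_mul
            apply Real.continuous_sqrt.measurable.comp
            exact Finset.measurable_sum _ fun ℓ _ =>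
              ((measurable_pi_apply ℓ).sub measurable_const).pow_const 2
  -- integrability of each indicator term
  have hIk : ∀ k, Integrable
      (fun ω => if U k ω ∈ Pint (Pi ω) j \ Pint α j then (1:ℝ) else 0) Pr := by
    intro k
    have hm : Measurable (fun ω => if U k ω ∈ Pint (Pi ω) j \ Pint α j then (1:ℝ) else 0) := by
      have : (fun ω => if U k ω ∈ Pint (Pi ω) j \ Pint α j then (1:ℝ) else 0)
          = fun ω => F (U k ω, Pi ω) := by
        funext ω; simp only [hFdef, Set.indicator_apply, hs2def, Set.mem_setOf_eq]
      rw [this]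
      exact hFmeas.comp ((hUmeas k).prodMk hPimeas)
    refine (integrable_const (1:ℝ)).mono' hm.aestronglyMeasurable (ae_of_all _ fun ω => ?_)
    split_ifs <;> simp
  have hsum : ∫ ω, (∑ k ∈ Finset.range K,
        if U k ω ∈ Pint (Pi ω) j \ Pint α j then (1:ℝ) else 0) / Real.sqrt K ∂Pr
      = (∑ k ∈ Finset.range K, ∫ ω,
          (if U k ω ∈ Pint (Pi ω) j \ Pint α j then (1:ℝ) else 0) ∂Pr) / Real.sqrt K := by
    rw [integral_div, integral_finset_sum _ fun k _ => hIk k]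
  rw [hsum]
  rcases Nat.eq_zero_or_pos K with hK | hK
  · subst hK; simp
  · have hKpos : (0:ℝ) < Real.sqrt K := Real.sqrt_pos.mpr (by exact_mod_cast hK)
    rw [div_le_iff₀ hKpos]
    have hEnn : 0 ≤ ∫ ω, G ω ∂Pr := integral_nonneg fun ω => Real.sqrt_nonneg _
    calc (∑ k ∈ Finset.range K, ∫ ω,
          (if U k ω ∈ Pint (Pi ω) j \ Pint α j then (1:ℝ) else 0) ∂Pr)
        ≤ ∑ _k ∈ Finset.range K, 2 * Real.sqrt J * ∫ ω, G ω ∂Pr :=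
          Finset.sum_le_sum fun k _ => key k
      _ = (K : ℝ) * (2 * Real.sqrt J * ∫ ω, G ω ∂Pr) := by
          rw [Finset.sum_const, Finset.card_range, nsmul_eq_mul]
      _ = 2 * Real.sqrt (K * J) * (∫ ω, G ω ∂Pr) * Real.sqrt K := by
          have h1 : Real.sqrt ((K:ℝ) * (J:ℝ)) = Real.sqrt K * Real.sqrt J :=
            Real.sqrt_mul (Nat.cast_nonneg K) _
          have h2 : Real.sqrt K * Real.sqrt K = (K:ℝ) :=
            Real.mul_self_sqrt (Nat.cast_nonneg K)
          rw [h1]; linear_combination 2 * Real.sqrt J * (∫ ω, G ω ∂Pr) * h2.symm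
      _ = 2 * Real.sqrt (K * J) * (∫ ω, Real.sqrt (∑ ℓ, (Pi ω ℓ - α ℓ) ^ 2) ∂Pr) * Real.sqrt K := rfl

end
end
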